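/- Let k ≥ 1 and let p₁ < p₂ < ⋯ < p_{2k} be distinct primes each satisfying pᵢ ≡ 1 (mod 8), pᵢ ≡ 2 (mod 3), and pᵢ ≡ 4 (mod 5). If m is a positive integer with φ(m) = 4·p₁ p₂ ⋯ p_{2k}, then there exists a subset S ⊆ {1,…,2k} such that both P₁ = 2·∏_{i∈S} pᵢ + 1 and P₂ = 2·∏_{i∉S} pᵢ + 1 are prime and either m = P₁P₂ or m = 2P₁P₂. -/

import Mathlib

/-- Splitting a product of primes over a finset into two factors corresponds
to a partition of the index set. -/
lemma prod_primes_split {ι : Type*} [DecidableEq ι] (p : ι → ℕ)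
    (hp : ∀ i, (p i).Prime) (A : Finset ι) :
    ∀ d₁ d₂ : ℕ, d₁ * d₂ = ∏ i ∈ A, p i →
      ∃ S, S ⊆ A ∧ d₁ = ∏ i ∈ S, p i ∧ d₂ = ∏ i ∈ A \ S, p i := by
  classical
  induction A using Finset.induction_on with
  | empty =>
      intro d₁ d₂ h
      simp only [Finset.prod_empty] at h
      have h1 : d₁ = 1 := Nat.dvd_one.mp ⟨d₂, h.symm⟩
      have h2 : d₂ = 1 := Nat.dvd_one.mp (Dvd.intro_left d₁ h)
      exact ⟨∅, by simp, by simp [h1], by simp [h2]⟩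
  | insert j s hj ih =>
      intro d₁ d₂ h
      rw [Finset.prod_insert hj] at h
      have hdvd : (p j) ∣ d₁ * d₂ := h ▸ dvd_mul_right _ _
      rcases (hp j).prime.dvd_mul.mp hdvd with hd | hd
      · obtain ⟨d₁', rfl⟩ := hd
        have h' : d₁' * d₂ = ∏ i ∈ s, p i := by
          have := h
          rw [mul_assoc] at this
          exact Nat.eq_of_mul_eq_mul_left (hp j).pos this
        obtain ⟨S, hS, h1, h2⟩ := ih d₁' d₂ h'
        have hjS : j ∉ S := fun hmem => hj (hS hmem)
        refine ⟨insert j S, Finset.insert_subset_insert j hS, ?_, ?_⟩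
        · rw [Finset.prod_insert hjS, h1]
        · have : insert j s \ insert j S = s \ S := by
            ext x
            simp only [Finset.mem_sdiff, Finset.mem_insert]
            constructor
            · rintro ⟨hx1, hx2⟩
              push_neg at hx2
              rcases hx1 with rfl | hx1
              · exact absurd rfl hx2.1
              · exact ⟨hx1, hx2.2⟩
            · rintro ⟨hx1, hx2⟩
              have : x ≠ j := fun hxj => hj (hxj ▸ hx1)
              exact ⟨Or.inr hx1, by push_neg; exact ⟨this, hx2⟩⟩
          rw [this, h2]
      · obtain ⟨d₂', rfl⟩ := hd
        have h' : d₁ * d₂' = ∏ i ∈ s, p i := by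
          have h2 : (p j) * (d₁ * d₂') = (p j) * ∏ i ∈ s, p i := by rw [← h]; ring
          exact Nat.eq_of_mul_eq_mul_left (hp j).pos h2
        obtain ⟨S, hS, h1, h2⟩ := ih d₁ d₂' h'
        have hjS : j ∉ S := fun hmem => hj (hS hmem)
        refine ⟨S, hS.trans (Finset.subset_insert j s), h1, ?_⟩
        rw [Finset.insert_sdiff_of_notMem s hjS, Finset.prod_insert
          (fun hmem => hj (Finset.mem_sdiff.mp hmem).1), h2]


/-- Let `k ≥ 1` and let `p₁ < ⋯ < p_{2k}` be primes with `pᵢ ≡ 1 (mod 8)`,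
`pᵢ ≡ 2 (mod 3)` and `pᵢ ≡ 4 (mod 5)`. If `m` is a positive integer with
`φ(m) = 4·p₁⋯p_{2k}`, then there is a subset `S ⊆ {1,…,2k}` such that both
`P₁ = 2·∏_{i∈S} pᵢ + 1` and `P₂ = 2·∏_{i∉S} pᵢ + 1` are prime and `m = P₁P₂`
or `m = 2P₁P₂`. -/
theorem totient_eq_four_mul_prod_structure (k : ℕ) (hk : 1 ≤ k)
    (p : Fin (2 * k) → ℕ) (hmono : StrictMono p) (hp : ∀ i, (p i).Prime)
    (h8 : ∀ i, p i % 8 = 1) (h3 : ∀ i, p i % 3 = 2) (h5 : ∀ i, p i % 5 = 4)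
    (m : ℕ) (hm : 0 < m) (hphi : m.totient = 4 * ∏ i, p i) :
    ∃ S : Finset (Fin (2 * k)),
      Nat.Prime (2 * (∏ i ∈ S, p i) + 1) ∧
      Nat.Prime (2 * (∏ i ∈ Sᶜ, p i) + 1) ∧
      (m = (2 * (∏ i ∈ S, p i) + 1) * (2 * (∏ i ∈ Sᶜ, p i) + 1) ∨
        m = 2 * ((2 * (∏ i ∈ S, p i) + 1) * (2 * (∏ i ∈ Sᶜ, p i) + 1))) := by
  classical
  set D : ℕ := ∏ i, p i with hD
  -- basic facts about D
  have hD0 : 0 < D := Finset.prod_pos (fun i _ => (hp i).pos)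
  have hpodd : ∀ i, p i % 2 = 1 := fun i => by have := h8 i; omega
  have hDodd : D % 2 = 1 := by
    rcases Nat.even_or_odd D with he | ho
    · exfalso
      obtain ⟨i, -, hi⟩ := (Nat.prime_two.prime.exists_mem_finset_dvd he.two_dvd)
      have := (Nat.prime_dvd_prime_iff_eq Nat.prime_two (hp i)).mp hi
      have := hpodd i; omega
    · exact Nat.odd_iff.mp ho
  have i0 : Fin (2 * k) := ⟨0, by omega⟩
  have hD1 : 1 < D := by
    have h1 : p i0 ∣ D := Finset.dvd_prod_of_mem p (Finset.mem_univ i0)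
    have := Nat.le_of_dvd hD0 h1
    have := (hp i0).two_le
    omega
  have hprimeD : ∀ q : ℕ, q.Prime → q ∣ D → q % 8 = 1 := by
    intro q hq hqD
    obtain ⟨i, -, hi⟩ := hq.prime.exists_mem_finset_dvd hqD
    have := (Nat.prime_dvd_prime_iff_eq hq (hp i)).mp hi
    rw [this]; exact h8 i
  have hD3 : D % 3 = 1 := by
    have h1 : D % 3 = (∏ i : Fin (2 * k), (p i % 3)) % 3 := Finset.prod_nat_mod _ _ _
    rw [Finset.prod_congr rfl (fun i _ => h3 i), Finset.prod_const,
      Finset.card_univ, Fintype.card_fin] at h1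
    rw [h1, pow_mul, Nat.pow_mod]
    norm_num
  have hD5 : D % 5 = 1 := by
    have h1 : D % 5 = (∏ i : Fin (2 * k), (p i % 5)) % 5 := Finset.prod_nat_mod _ _ _
    rw [Finset.prod_congr rfl (fun i _ => h5 i), Finset.prod_const,
      Finset.card_univ, Fintype.card_fin] at h1
    rw [h1, pow_mul, Nat.pow_mod]
    norm_num
  -- split m into 2-part and odd part
  set a : ℕ := m.factorization 2 with ha
  set n : ℕ := m / 2 ^ a with hn
  have hmn : 2 ^ a * n = m := Nat.ordProj_mul_ordCompl_eq_self m 2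
  have hn2 : ¬ 2 ∣ n := Nat.not_dvd_ordCompl Nat.prime_two hm.ne'
  have hn0 : 0 < n := Nat.ordCompl_pos 2 hm.ne'
  obtain ⟨b, hcb, hb0⟩ : ∃ b, (2 ^ a).totient = 2 ^ b ∧ (b = 0 → a ≤ 1) := by
    cases a with
    | zero => exact ⟨0, by simp, fun _ => by omega⟩
    | succ t =>
        refine ⟨t, ?_, fun h => by omega⟩
        rw [Nat.totient_prime_pow Nat.prime_two (Nat.succ_pos t)]
        simp
  have hcop : Nat.Coprime (2 ^ a) n :=
    Nat.Coprime.pow_left _ ((Nat.prime_two.coprime_iff_not_dvd).mpr hn2)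
  have htot : 2 ^ b * n.totient = 4 * D := by
    rw [← hcb, ← Nat.totient_mul hcop, hmn, hphi]
  have hpf := Nat.totient_eq_prod_factorization hn0.ne'
  rw [Finsupp.prod, Nat.support_factorization] at hpf
  have hnn := Nat.factorization_prod_pow_eq_self hn0.ne'
  rw [Finsupp.prod, Nat.support_factorization] at hnn
  have hT : ∀ q ∈ n.primeFactors, q.Prime ∧ q % 2 = 1 ∧ n.factorization q ≠ 0 := by
    intro q hq
    have hqp := Nat.prime_of_mem_primeFactors hq
    have hq2 : q ≠ 2 := fun h => hn2 (h ▸ Nat.dvd_of_mem_primeFactors hq)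
    refine ⟨hqp, Nat.odd_iff.mp (hqp.odd_of_ne_two hq2), ?_⟩
    rw [← Nat.support_factorization] at hq
    exact Finsupp.mem_support_iff.mp hq
  -- at most two odd prime factors
  have hcard2 : n.primeFactors.card ≤ 2 := by
    have hdvd1 : 2 ^ n.primeFactors.card ∣ n.totient := by
      rw [hpf, ← Finset.prod_const]
      refine Finset.prod_dvd_prod_of_dvd _ _ (fun q hq => ?_)
      obtain ⟨hqp, hq2, -⟩ := hT q hq
      have h2 : (2 : ℕ) ∣ q - 1 := by have := hqp.two_le; omega
      exact dvd_mul_of_dvd_right h2 _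
    have hdvd2 : 2 ^ n.primeFactors.card ∣ 4 * D := by
      rw [← htot]
      exact (hdvd1.mul_left _)
    have hcopD : Nat.Coprime (2 ^ n.primeFactors.card) D :=
      Nat.Coprime.pow_left _ ((Nat.prime_two.coprime_iff_not_dvd).mpr (by omega))
    have h4 : 2 ^ n.primeFactors.card ∣ 2 ^ 2 := by
      have := (Nat.Coprime.dvd_of_dvd_mul_right hcopD (by rwa [mul_comm] at hdvd2))
      norm_num at this ⊢
      exact this
    exact (Nat.pow_dvd_pow_iff_le_right (by norm_num)).mp h4
  have hcases : n.primeFactors.card = 0 ∨ n.primeFactors.card = 1 ∨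
      n.primeFactors.card = 2 := by omega
  rcases hcases with hc0 | hc1 | hc2
  · -- no odd prime factors: impossible
    exfalso
    have hTe : n.primeFactors = ∅ := Finset.card_eq_zero.mp hc0
    have hn1 : n = 1 := by
      rcases Nat.primeFactors_eq_empty.mp hTe with h | h
      · omega
      · exact h
    rw [hn1, Nat.totient_one, mul_one] at htot
    have hdD : D ∣ 2 ^ b := ⟨4, by omega⟩
    have h1 : p i0 ∣ 2 ^ b := (Finset.dvd_prod_of_mem p (Finset.mem_univ i0)).trans hdD
    have h2 : p i0 ∣ 2 := (hp i0).prime.dvd_of_dvd_pow h1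
    have := Nat.le_of_dvd (by norm_num) h2
    have := (hp i0).two_le
    have := h8 i0
    omega
  · -- exactly one odd prime factor: impossible
    exfalso
    obtain ⟨q, hTq⟩ := Finset.card_eq_one.mp hc1
    obtain ⟨hqp, hq2, hqe⟩ := hT q (hTq ▸ Finset.mem_singleton_self q)
    rw [hTq, Finset.prod_singleton] at hpf hnn
    have he1 : n.factorization q = 1 := by
      by_contra hne
      have he2 : 2 ≤ n.factorization q := by omega
      have hq_tot : q ∣ n.totient := by
        rw [hpf]
        exact dvd_mul_of_dvd_left (dvd_pow_self q (by omega)) _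
      have hq4D : q ∣ 4 * D := by
        rw [← htot]; exact hq_tot.mul_left _
      have hcop4 : Nat.Coprime q 4 := by
        have hnd : ¬ q ∣ 2 := fun h => by
          have := (Nat.prime_dvd_prime_iff_eq hqp Nat.prime_two).mp h; omega
        have : Nat.Coprime q 2 := (hqp.coprime_iff_not_dvd).mpr hnd
        have := this.pow_right 2
        norm_num at this
        exact this
      have hqD : q ∣ D := hcop4.dvd_of_dvd_mul_left hq4D
      have hq8 : q % 8 = 1 := hprimeD q hqp hqD
      have h8dvd : (8 : ℕ) ∣ 4 * D := by
        have h1 : (8 : ℕ) ∣ q - 1 := by have := hqp.two_le; omega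
        have h2 : q - 1 ∣ n.totient := by
          rw [hpf]; exact dvd_mul_left _ _
        have := (h1.trans h2).mul_left (2 ^ b)
        rw [← htot]
        exact dvd_mul_of_dvd_right (h1.trans h2) _
      omega
    rw [he1] at hpf
    simp only [pow_zero, one_mul, Nat.sub_self] at hpf
    rw [hpf] at htot
    -- htot : 2 ^ b * (q - 1) = 4 * D
    have hq1 : 2 ≤ q := hqp.two_le
    have hb2 : b ≤ 2 := by
      by_contra hb
      have h8b : (8 : ℕ) ∣ 2 ^ b := by
        have : (2 : ℕ) ^ 3 ∣ 2 ^ b := pow_dvd_pow 2 (by omega)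
        norm_num at this; exact this
      have : (8 : ℕ) ∣ 4 * D := by
        rw [← htot]; exact h8b.mul_right _
      omega
    interval_cases b
    · -- q = 4D + 1
      have hq : q = 4 * D + 1 := by omega
      have h5q : (5 : ℕ) ∣ q := by omega
      have := (Nat.prime_dvd_prime_iff_eq (by norm_num) hqp).mp h5q
      omega
    · -- q = 2D + 1
      have hq : q = 2 * D + 1 := by omega
      have h3q : (3 : ℕ) ∣ q := by omega
      have := (Nat.prime_dvd_prime_iff_eq (by norm_num) hqp).mp h3q
      omega
    · -- q - 1 = D, parity contradiction
      omega
  · -- exactly two odd prime factors: the main case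
    obtain ⟨q₁, q₂, hne, hTq⟩ := Finset.card_eq_two.mp hc2
    obtain ⟨hq₁p, hq₁2, hq₁e⟩ := hT q₁ (hTq ▸ by simp)
    obtain ⟨hq₂p, hq₂2, hq₂e⟩ := hT q₂ (hTq ▸ by simp)
    rw [hTq, Finset.prod_pair hne] at hpf hnn
    have key : ∀ x y : ℕ, x.Prime → x % 2 = 1 → n.factorization x ≠ 0 →
        y.Prime → y % 2 = 1 →
        n.totient = x ^ (n.factorization x - 1) * (x - 1) *
          (y ^ (n.factorization y - 1) * (y - 1)) →
        n.factorization x = 1 := by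
      intro x y hx hx2 hxe hy hy2 hxy
      by_contra hnex
      have hx2' : 2 ≤ n.factorization x := by omega
      have hx_tot : x ∣ n.totient := by
        rw [hxy]
        exact dvd_mul_of_dvd_left (dvd_mul_of_dvd_left (dvd_pow_self x (by omega)) _) _
      have hx4D : x ∣ 4 * D := by rw [← htot]; exact hx_tot.mul_left _
      have hcop4 : Nat.Coprime x 4 := by
        have hnd : ¬ x ∣ 2 := fun h => by
          have := (Nat.prime_dvd_prime_iff_eq hx Nat.prime_two).mp h; omega
        have h2 : Nat.Coprime x 2 := (hx.coprime_iff_not_dvd).mpr hnd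
        have := h2.pow_right 2
        norm_num at this; exact this
      have hxD : x ∣ D := hcop4.dvd_of_dvd_mul_left hx4D
      have hx8 : x % 8 = 1 := hprimeD x hx hxD
      have h16 : (16 : ℕ) ∣ 4 * D := by
        have h1 : (8 : ℕ) ∣ x - 1 := by have := hx.two_le; omega
        have h2 : (2 : ℕ) ∣ y - 1 := by have := hy.two_le; omega
        have h3 : (16 : ℕ) ∣ (x - 1) * (y - 1) := by
          have := mul_dvd_mul h1 h2
          norm_num at this; exact this
        have h4 : (x - 1) * (y - 1) ∣ n.totient := by
          rw [hxy]
          exact mul_dvd_mul (dvd_mul_left _ _) (dvd_mul_left _ _)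
        rw [← htot]
        exact dvd_mul_of_dvd_right (h3.trans h4) _
      omega
    have he₁ : n.factorization q₁ = 1 := key q₁ q₂ hq₁p hq₁2 hq₁e hq₂p hq₂2 hpf
    have he₂ : n.factorization q₂ = 1 := key q₂ q₁ hq₂p hq₂2 hq₂e hq₁p hq₁2
      (by rw [hpf]; ring)
    rw [he₁, he₂] at hpf hnn
    simp only [pow_one, Nat.sub_self, pow_zero, one_mul] at hpf hnn
    -- hpf : n.totient = (q₁ - 1) * (q₂ - 1), hnn : q₁ * q₂ = n
    rw [hpf] at htot
    have hq₁1 : 2 ≤ q₁ := hq₁p.two_le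
    have hq₂1 : 2 ≤ q₂ := hq₂p.two_le
    set d₁ : ℕ := (q₁ - 1) / 2 with hd₁
    set d₂ : ℕ := (q₂ - 1) / 2 with hd₂
    have hq₁d : q₁ = 2 * d₁ + 1 := by omega
    have hq₂d : q₂ = 2 * d₂ + 1 := by omega
    have htot' : 2 ^ b * (d₁ * d₂) * 4 = D * 4 := by
      have h1 : q₁ - 1 = 2 * d₁ := by omega
      have h2 : q₂ - 1 = 2 * d₂ := by omega
      rw [h1, h2] at htot
      ring_nf
      ring_nf at htot
      linarith
    have htot'' : 2 ^ b * (d₁ * d₂) = D := by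
      have := Nat.eq_of_mul_eq_mul_right (by norm_num : (0:ℕ) < 4) htot'
      exact this
    have hb : b = 0 := by
      by_contra hb
      have h2b : (2 : ℕ) ∣ 2 ^ b := dvd_pow_self 2 hb
      have : (2 : ℕ) ∣ D := by
        rw [← htot'']
        exact h2b.mul_right _
      omega
    have ha1 : a ≤ 1 := hb0 hb
    rw [hb, pow_zero, one_mul] at htot''
    obtain ⟨S, -, h1, h2⟩ := prod_primes_split p hp Finset.univ d₁ d₂ (by rw [htot''])
    refine ⟨S, ?_, ?_, ?_⟩
    · rw [← h1, ← hq₁d]; exact hq₁p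
    · rw [Finset.compl_eq_univ_sdiff, ← h2, ← hq₂d]; exact hq₂p
    · rw [Finset.compl_eq_univ_sdiff, ← h2, ← h1, ← hq₁d, ← hq₂d]
      interval_cases a
      · left; rw [← hmn, pow_zero, one_mul, hnn]
      · right; rw [← hmn, pow_one, hnn]
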